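/- For independent Bernoulli(p) random variables I₁₂, I₂₃, I₁₃ and V_{12,3} = (2-p)I₁₃I₂₃ − p·max(I₁₃,I₂₃), one has E[V_{12,3}·1{max(I₁₂,I₂₃)=1}] = −E[V_{12,3}·1{max(I₁₂,I₂₃)=0}] = p²(1−p)². -/

import Mathlib

open MeasureTheory ProbabilityTheory Filter
open scoped ENNReal

/-- Three i.i.d. Bernoulli(p) random variables, as a product measure on `Fin 3 → Bool`;
coordinate `0` is `I₁₂`, coordinate `1` is `I₁₃`, coordinate `2` is `I₂₃`. -/
noncomputable def bern3 (p : ℝ≥0∞) (hp : p ≤ 1) : Measure (Fin 3 → Bool) :=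
  Measure.pi fun _ => (PMF.ofFintype (fun b => cond b p (1 - p)) (by simp [hp])).toMeasure

/-- The real-valued indicator of a Boolean. -/
def bInd (b : Bool) : ℝ := if b then 1 else 0

/-- `V_{12,3} = (2-p) I₁₃ I₂₃ − p max(I₁₃, I₂₃)`. -/
noncomputable def V123 (p : ℝ) (ω : Fin 3 → Bool) : ℝ :=
  (2 - p) * bInd (ω 1) * bInd (ω 2) - p * max (bInd (ω 1)) (bInd (ω 2))

/-- `V_{13,2} = (2-p) I₁₂ I₂₃ − p max(I₁₂, I₂₃)`. -/
noncomputable def V132 (p : ℝ) (ω : Fin 3 → Bool) : ℝ :=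
  (2 - p) * bInd (ω 0) * bInd (ω 2) - p * max (bInd (ω 0)) (bInd (ω 2))


lemma bern3_singleton (p : ℝ≥0∞) (hp : p ≤ 1) (x : Fin 3 → Bool) :
    bern3 p hp {x} = ∏ i : Fin 3, (cond (x i) p (1 - p)) := by
  rw [bern3, ← Set.univ_pi_singleton x, Measure.pi_pi]
  congr 1; funext i
  rw [PMF.toMeasure_apply_singleton _ _ (measurableSet_singleton _), PMF.ofFintype_apply]

lemma sum_pi3 (g : (Fin 3 → Bool) → ℝ) :
    ∑ x, g x = ∑ t : Bool × Bool × Bool, g ![t.1, t.2.1, t.2.2] := by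
  apply Fintype.sum_bijective (fun (t : Bool × Bool × Bool) => ![t.1, t.2.1, t.2.2]) ?_ _ _ (fun t => rfl) |>.symm
  constructor
  · intro a b h
    have h0 := congrFun h 0
    have h1 := congrFun h 1
    have h2 := congrFun h 2
    simp [Matrix.cons_val_zero, Matrix.cons_val_one] at h0 h1 h2
    exact Prod.ext h0 (Prod.ext h1 h2)
  · intro x
    refine ⟨(x 0, x 1, x 2), ?_⟩
    funext i; fin_cases i <;> simp

lemma integral_bern3 (p : ℝ) (hp : p ∈ Set.Icc (0:ℝ) 1) (f : (Fin 3 → Bool) → ℝ) :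
    ∫ ω, f ω ∂(bern3 (ENNReal.ofReal p) (ENNReal.ofReal_le_one.mpr hp.2))
      = ∑ t : Bool × Bool × Bool,
          ((cond t.1 p (1-p)) * (cond t.2.1 p (1-p)) * (cond t.2.2 p (1-p))) * f ![t.1, t.2.1, t.2.2] := by
  have : IsProbabilityMeasure (bern3 (ENNReal.ofReal p) (ENNReal.ofReal_le_one.mpr hp.2)) := by
    unfold bern3; infer_instance
  rw [integral_fintype .of_finite, sum_pi3]
  congr 1; funext t
  rw [measureReal_def, bern3_singleton, smul_eq_mul]
  congr 1
  rw [Fin.prod_univ_three]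
  have key : ∀ b : Bool, (cond b (ENNReal.ofReal p) (1 - ENNReal.ofReal p)).toReal = cond b p (1-p) := by
    intro b; cases b
    · simp [ENNReal.toReal_sub_of_le (ENNReal.ofReal_le_one.mpr hp.2) (by norm_num),
        ENNReal.toReal_ofReal hp.1]
    · simp [ENNReal.toReal_ofReal hp.1]
  simp [Matrix.cons_val_zero, Matrix.cons_val_one, ENNReal.toReal_mul, key]

/-- For mutually independent Bernoulli(p) indicators `I₁₂, I₁₃, I₂₃` and
`V_{12,3} = (2-p) I₁₃ I₂₃ − p max(I₁₃, I₂₃)`, one has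
`E[V_{12,3} 1{max(I₁₂,I₂₃)=1}] = −E[V_{12,3} 1{max(I₁₂,I₂₃)=0}] = p²(1−p)²`. -/
theorem expectation_V123_indicator (p : ℝ) (hp : p ∈ Set.Icc (0 : ℝ) 1) :
    (∫ ω, V123 p ω * (if (ω 0 || ω 2) = true then (1 : ℝ) else 0)
        ∂(bern3 (ENNReal.ofReal p) (ENNReal.ofReal_le_one.mpr hp.2))
      = -∫ ω, V123 p ω * (if (ω 0 || ω 2) = false then (1 : ℝ) else 0)
          ∂(bern3 (ENNReal.ofReal p) (ENNReal.ofReal_le_one.mpr hp.2))) ∧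
    (∫ ω, V123 p ω * (if (ω 0 || ω 2) = true then (1 : ℝ) else 0)
        ∂(bern3 (ENNReal.ofReal p) (ENNReal.ofReal_le_one.mpr hp.2))
      = p ^ 2 * (1 - p) ^ 2) := by
  have h1 : (∫ ω, V123 p ω * (if (ω 0 || ω 2) = true then (1 : ℝ) else 0)
        ∂(bern3 (ENNReal.ofReal p) (ENNReal.ofReal_le_one.mpr hp.2))) = p ^ 2 * (1 - p) ^ 2 := by
    rw [integral_bern3 p hp]
    simp [Fintype.sum_prod_type, V123, bInd]
    ring
  have h2 : (∫ ω, V123 p ω * (if (ω 0 || ω 2) = false then (1 : ℝ) else 0)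
        ∂(bern3 (ENNReal.ofReal p) (ENNReal.ofReal_le_one.mpr hp.2))) = -(p ^ 2 * (1 - p) ^ 2) := by
    rw [integral_bern3 p hp]
    simp [Fintype.sum_prod_type, V123, bInd]
    ring
  exact ⟨by rw [h1, h2]; ring, h1⟩
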